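/- Let r > 0, let δ ∈ (0, π/3], and let v, e ∈ ℝ² with ℓ(v, e) ≥ 2r. Let u ∈ ℝ² satisfy ℓ(v, u) = 2r·cos(δ/2), set φ = ∠(u, v, e), and assume φ ≤ δ/2. Set Φ = arccos(2·cos(δ/2)·cos(φ) − 1). Then for every point a in the anchor region closedBall(v, r) ∩ closedBall(u, r) and every point x ∈ closedBall(v, r) with x ≠ v and ∠(x, v, e) > Φ, one has ℓ(a, e) ≤ ℓ(x, e). -/

import Mathlib

open Real EuclideanGeometry Metric

set_option maxHeartbeats 1000000 in
theorem stmt_2 (r δ : ℝ) (hr : 0 < r) (hδ : δ ∈ Set.Ioc 0 (π / 3))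
    (v e u : EuclideanSpace ℝ (Fin 2))
    (hve : 2 * r ≤ dist v e)
    (hu : dist v u = 2 * r * Real.cos (δ / 2))
    (hφ : EuclideanGeometry.angle u v e ≤ δ / 2) :
    ∀ a ∈ Metric.closedBall v r ∩ Metric.closedBall u r,
      ∀ x ∈ Metric.closedBall v r, x ≠ v →
        Real.arccos (2 * Real.cos (δ / 2) * Real.cos (EuclideanGeometry.angle u v e) - 1) <
          EuclideanGeometry.angle x v e →
        dist a e ≤ dist x e := by
  obtain ⟨hδ0, hδ1⟩ := hδ
  have hπ := Real.pi_pos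
  intro a ha x hx hxv hΦ
  obtain ⟨hav, hau⟩ := ha
  have hav' : dist a v ≤ r := mem_closedBall.1 hav
  have hau' : dist a u ≤ r := mem_closedBall.1 hau
  have hxv' : dist x v ≤ r := mem_closedBall.1 hx
  have hφ0 : 0 ≤ EuclideanGeometry.angle u v e := EuclideanGeometry.angle_nonneg _ _ _
  have hD0 : (0:ℝ) < dist v e := by linarith
  -- basic cosine facts
  have hcosδ2pos : 0 < Real.cos (δ / 2) :=
    Real.cos_pos_of_mem_Ioo ⟨by linarith, by linarith⟩
  have hcosφδ : Real.cos (δ / 2) ≤ Real.cos (EuclideanGeometry.angle u v e) :=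
    Real.cos_le_cos_of_nonneg_of_le_pi hφ0 (by linarith) hφ
  have hcosφ1 : Real.cos (EuclideanGeometry.angle u v e) ≤ 1 := Real.cos_le_one _
  have hcosδ1 : Real.cos (δ / 2) ≤ 1 := Real.cos_le_one _
  have hcossq : Real.cos (δ / 2) ^ 2 = 1 / 2 + Real.cos δ / 2 := by
    have h := Real.cos_sq (δ / 2)
    rw [show 2 * (δ / 2) = δ by ring] at h
    exact h
  have hcosδge : (1 : ℝ) / 2 ≤ Real.cos δ := by
    have h := Real.cos_le_cos_of_nonneg_of_le_pi (le_of_lt hδ0) (by linarith) hδ1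
    rwa [Real.cos_pi_div_three] at h
  -- abbreviations as opaque atoms
  obtain ⟨cφ, hcφ⟩ : ∃ t, Real.cos (EuclideanGeometry.angle u v e) = t := ⟨_, rfl⟩
  obtain ⟨cδ, hcδ⟩ : ∃ t, Real.cos (δ / 2) = t := ⟨_, rfl⟩
  obtain ⟨D, hD⟩ : ∃ t, dist v e = t := ⟨_, rfl⟩
  simp only [hcφ, hcδ, hD] at hcosφδ hcosφ1 hcosδ1 hcosδ2pos hΦ hcossq hu hD0 hve
  have hc2 : (1 : ℝ) / 2 ≤ 2 * cδ * cφ - 1 := by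
    nlinarith [mul_nonneg (sub_nonneg.2 hcosφδ) (le_of_lt hcosδ2pos)]
  have hc1 : 2 * cδ * cφ - 1 ≤ 1 := by
    nlinarith [mul_nonneg (sub_nonneg.2 hcosφδ) (le_of_lt hcosδ2pos)]
  have hcosΦ : Real.cos (Real.arccos (2 * cδ * cφ - 1)) = 2 * cδ * cφ - 1 :=
    Real.cos_arccos (by linarith) hc1
  -- x side: cos (angle x v e) < c
  have hcosθ : Real.cos (EuclideanGeometry.angle x v e) < 2 * cδ * cφ - 1 := by
    have h1 : Real.cos (EuclideanGeometry.angle x v e) <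
        Real.cos (Real.arccos (2 * cδ * cφ - 1)) :=
      Real.cos_lt_cos_of_nonneg_of_le_pi (Real.arccos_nonneg _)
        (EuclideanGeometry.angle_le_pi _ _ _) hΦ
    rwa [hcosΦ] at h1
  have ht0 : 0 < dist x v := dist_pos.2 hxv
  have hlx := EuclideanGeometry.law_cos x v e
  have hDev : dist e v = D := by rw [dist_comm]; exact hD
  rw [hDev] at hlx
  have hxK : r ^ 2 + D ^ 2 - 2 * r * D * (2 * cδ * cφ - 1) ≤ dist x e * dist x e := by
    have h1 : 0 ≤ 2 * D * (2 * cδ * cφ - 1) - (r + dist x v) := by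
      nlinarith [mul_nonneg (le_of_lt hD0) (by linarith : (0:ℝ) ≤ (2 * cδ * cφ - 1) - 1/2)]
    have h2 : 0 ≤ (r - dist x v) * (2 * D * (2 * cδ * cφ - 1) - (r + dist x v)) :=
      mul_nonneg (by linarith) h1
    have h3 : 0 ≤ dist x v * D * ((2 * cδ * cφ - 1) - Real.cos (EuclideanGeometry.angle x v e)) := by
      have := mul_pos (mul_pos ht0 hD0) (sub_pos.2 hcosθ)
      linarith
    rw [hlx]
    linarith [h2, h3]
  -- a side
  have hangle : InnerProductGeometry.angle (u - v) (e - v) = EuclideanGeometry.angle u v e := by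
    rw [EuclideanGeometry.angle, vsub_eq_sub, vsub_eq_sub]
  have hUE : (inner ℝ (u - v) (e - v) : ℝ) = cφ * (‖u - v‖ * ‖e - v‖) := by
    rw [← InnerProductGeometry.cos_angle_mul_norm_mul_norm (u - v) (e - v), hangle, hcφ]
  have hnU : ‖u - v‖ = 2 * r * cδ := by
    rw [← dist_eq_norm, dist_comm]; exact hu
  have hnE : ‖e - v‖ = D := by rw [← dist_eq_norm, dist_comm]; exact hD
  have hnA : ‖a - v‖ ≤ r := by rw [← dist_eq_norm]; exact hav'
  have hnA0 : 0 ≤ ‖a - v‖ := norm_nonneg _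
  have hnAU : ‖a - u‖ ≤ r := by rw [← dist_eq_norm]; exact hau'
  have hCS : -(‖a - u‖ * ‖e - v‖) ≤ (inner ℝ (a - u) (e - v) : ℝ) := by
    have h := abs_real_inner_le_norm (a - u) (e - v)
    cases' abs_le.1 h with h1 _
    linarith
  have hsplit : (inner ℝ (a - v) (e - v) : ℝ) =
      (inner ℝ (u - v) (e - v) : ℝ) + (inner ℝ (a - u) (e - v) : ℝ) := by
    rw [← inner_add_left]
    congr 1
    abel
  have hexp : dist a e ^ 2 = ‖a - v‖ ^ 2 - 2 * (inner ℝ (a - v) (e - v) : ℝ) + ‖e - v‖ ^ 2 := by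
    rw [dist_eq_norm, show a - e = (a - v) - (e - v) by abel, norm_sub_sq_real]
  have haK : dist a e ^ 2 ≤ r ^ 2 + D ^ 2 - 2 * r * D * (2 * cδ * cφ - 1) := by
    have hAU2 : -(r * D) ≤ (inner ℝ (a - u) (e - v) : ℝ) := by
      have h1 : ‖a - u‖ * ‖e - v‖ ≤ r * D := by
        rw [hnE]
        exact mul_le_mul_of_nonneg_right hnAU (le_of_lt hD0)
      linarith
    have hA2 : ‖a - v‖ ^ 2 ≤ r ^ 2 := pow_le_pow_left₀ hnA0 hnA 2
    rw [hexp, hsplit, hUE, hnU, hnE]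
    linarith [hA2, hAU2]
  -- conclude
  have hsq : dist a e ^ 2 ≤ dist x e ^ 2 := by
    have hx2 : dist x e * dist x e = dist x e ^ 2 := by ring
    rw [hx2] at hxK
    linarith
  have hs := Real.sqrt_le_sqrt hsq
  rwa [Real.sqrt_sq dist_nonneg, Real.sqrt_sq dist_nonneg] at hs
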